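/- For λ with 2λ+1 ≠ 0, the Hesse cubic F_λ = x³+y³+z³+6λxyz admits the decomposition F_λ = c₀(x+y+z)³ + c₁((1+λ)x−λy−λz)³ + c₂(−λx+(1+λ)y−λz)³ + c₃(−λx−λy+(1+λ)z)³ with c₀ = λ(λ²+λ+1)/(2λ+1)² and c₁=c₂=c₃ = 1/(2λ+1)². -/

import Mathlib

theorem hesse_pencil_decomposition (lam : ℝ) (h : 2 * lam + 1 ≠ 0) :
    ∀ x y z : ℝ,
      x ^ 3 + y ^ 3 + z ^ 3 + 6 * lam * (x * y * z) =
        (lam * (lam ^ 2 + lam + 1) / (2 * lam + 1) ^ 2) * (x + y + z) ^ 3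
          + (1 / (2 * lam + 1) ^ 2) * ((1 + lam) * x - lam * y - lam * z) ^ 3
          + (1 / (2 * lam + 1) ^ 2) * (-lam * x + (1 + lam) * y - lam * z) ^ 3
          + (1 / (2 * lam + 1) ^ 2) * (-lam * x - lam * y + (1 + lam) * z) ^ 3 := by
  intro x y z
  have h2 : (2 * lam + 1) ^ 2 ≠ 0 := pow_ne_zero _ h
  field_simp
  rw [eq_div_iff (by rwa [mul_comm] at h2)]
  ring
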